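/- Let N ≥ 1, p > 1 and −N < α < N(p−1). Then the weight w on ℝ^N defined by w(x) = |x|^α for |x| ≤ 1 and w(x) = exp(|x| − 1) for |x| > 1 belongs to the class 𝒜_p^loc. -/

import Mathlib

open MeasureTheory

/-- The axis-parallel cube in `ℝ^N` with center `a` and side length `h`. -/
def locCube (N : ℕ) (a : Fin N → ℝ) (h : ℝ) : Set (Fin N → ℝ) :=
  Set.univ.pi fun i => Set.Icc (a i - h / 2) (a i + h / 2)

/-- The local Muckenhoupt quantity of the weight `w` on the cube with center `a`
and side `h`: for `p = 1` it is `(w(Q)/|Q|) · ess sup_Q (1/w)`, and for `p > 1` it is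
`(w(Q)/|Q|) · ((1/|Q|) ∫_Q w^(1-p'))^(p/p')` where `p' = p/(p-1)`. -/
noncomputable def apLocQuantity (N : ℕ) (p : ℝ) (w : (Fin N → ℝ) → ℝ)
    (a : Fin N → ℝ) (h : ℝ) : ℝ :=
  if p = 1 then
    ((∫ x in locCube N a h, w x) / h ^ N) *
      essSup (fun x => (w x)⁻¹) (volume.restrict (locCube N a h))
  else
    ((∫ x in locCube N a h, w x) / h ^ N) *
      ((h ^ N)⁻¹ * ∫ x in locCube N a h, (w x) ^ (1 - p / (p - 1))) ^ (p / (p / (p - 1)))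

/-- `w` belongs to the local Muckenhoupt class `𝒜_p^loc` on `ℝ^N`: it is a weight
(locally integrable and a.e. positive) whose local Muckenhoupt quantities over all
axis-parallel cubes of volume at most `1` are uniformly bounded. -/
def MemApLoc (N : ℕ) (p : ℝ) (w : (Fin N → ℝ) → ℝ) : Prop :=
  LocallyIntegrable w volume ∧
  (∀ᵐ x ∂(volume : Measure (Fin N → ℝ)), 0 < w x) ∧
  ∃ C : ℝ, ∀ (a : Fin N → ℝ) (h : ℝ), 0 < h → h ^ N ≤ 1 → apLocQuantity N p w a h ≤ C

namespace ApLocAux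

open scoped ENNReal

noncomputable def rho {N : ℕ} (x : Fin N → ℝ) : ℝ := Real.sqrt (∑ i, (x i) ^ 2)

lemma rho_nonneg {N : ℕ} (x : Fin N → ℝ) : 0 ≤ rho x := Real.sqrt_nonneg _

lemma continuous_rho {N : ℕ} : Continuous (rho (N := N)) :=
  Real.continuous_sqrt.comp (by continuity)

lemma measurable_rho {N : ℕ} : Measurable (rho (N := N)) := continuous_rho.measurable

lemma rho_eq_norm {N : ℕ} (x : Fin N → ℝ) :
    rho x = ‖(WithLp.equiv 2 (Fin N → ℝ)).symm x‖ := by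
  rw [EuclideanSpace.norm_eq]
  simp [rho, sq_abs]

lemma abs_rho_sub_rho {N : ℕ} (x a : Fin N → ℝ) : |rho x - rho a| ≤ rho (x - a) := by
  rw [rho_eq_norm, rho_eq_norm, rho_eq_norm]
  have : (WithLp.equiv 2 (Fin N → ℝ)).symm (x - a)
      = (WithLp.equiv 2 (Fin N → ℝ)).symm x - (WithLp.equiv 2 (Fin N → ℝ)).symm a := rfl
  rw [this]
  exact abs_norm_sub_norm_le _ _

lemma abs_le_rho {N : ℕ} (x : Fin N → ℝ) (i : Fin N) : |x i| ≤ rho x := by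
  rw [← Real.sqrt_sq_eq_abs]
  exact Real.sqrt_le_sqrt (Finset.single_le_sum (f := fun j => (x j) ^ 2)
    (fun j _ => sq_nonneg _) (Finset.mem_univ i))

lemma volume_sublevel_le {N : ℕ} {s : ℝ} (hs : 0 ≤ s) :
    volume {x : Fin N → ℝ | rho x ≤ s} ≤ ENNReal.ofReal ((2 * s) ^ N) := by
  have hsub : {x : Fin N → ℝ | rho x ≤ s} ⊆ Set.univ.pi fun _ => Set.Icc (-s) s := by
    intro x hx i _
    have := (abs_le_rho x i).trans hx
    exact abs_le.mp this
  calc volume {x : Fin N → ℝ | rho x ≤ s} ≤ volume (Set.univ.pi fun _ : Fin N => Set.Icc (-s) s) :=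
        measure_mono hsub
    _ = ENNReal.ofReal ((2 * s) ^ N) := by
        rw [volume_pi_pi]
        simp only [Real.volume_Icc]
        rw [Finset.prod_const, ← ENNReal.ofReal_pow (by linarith)]
        norm_num
        ring_nf

lemma volume_locCube {N : ℕ} (a : Fin N → ℝ) {h : ℝ} (hh : 0 ≤ h) :
    volume (locCube N a h) = ENNReal.ofReal (h ^ N) := by
  rw [locCube, volume_pi_pi]
  have : ∀ i : Fin N, ENNReal.ofReal (a i + h / 2 - (a i - h / 2)) = ENNReal.ofReal h := by
    intro i; ring_nf
  simp only [Real.volume_Icc, this]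
  rw [Finset.prod_const, ← ENNReal.ofReal_pow hh]
  norm_num

lemma measurableSet_locCube {N : ℕ} (a : Fin N → ℝ) (h : ℝ) :
    MeasurableSet (locCube N a h) :=
  MeasurableSet.univ_pi fun _ => measurableSet_Icc

lemma rho_eq_zero_iff {N : ℕ} {x : Fin N → ℝ} : rho x = 0 ↔ x = 0 := by
  rw [rho, Real.sqrt_eq_zero (by positivity)]
  constructor
  · intro hs
    funext i
    have h1 : (x i) ^ 2 = 0 := by
      have := Finset.sum_eq_zero_iff_of_nonneg (fun j _ => sq_nonneg (x j)) |>.mp hs i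
        (Finset.mem_univ i)
      exact this
    exact pow_eq_zero_iff (n := 2) (by norm_num) |>.mp (h1)
  · rintro rfl; simp

lemma volume_rho_zero {N : ℕ} (hN : 1 ≤ N) : volume {x : Fin N → ℝ | rho x = 0} = 0 := by
  have : {x : Fin N → ℝ | rho x = 0} = {0} := by
    ext x; simp [rho_eq_zero_iff]
  rw [this]
  have h0 : ({0} : Set (Fin N → ℝ)) ⊆ Set.univ.pi fun _ => ({0} : Set ℝ) := by
    intro x hx i _; simp_all
  refine le_antisymm ((measure_mono h0).trans ?_) zero_le
  rw [volume_pi_pi]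
  simp only [Real.volume_singleton]
  rw [Finset.prod_const, zero_pow (by simp; omega)]

/-- Key estimate: the integral of `rho ^ γ` over a sublevel set of `rho`. -/
lemma key_lintegral {N : ℕ} (hN : 1 ≤ N) {γ : ℝ} (hγ : -(N : ℝ) < γ) :
    ∃ C : ℝ≥0∞, C ≠ ⊤ ∧ ∀ r : ℝ, 0 < r →
      ∫⁻ x in {x : Fin N → ℝ | rho x ≤ r}, ENNReal.ofReal (rho x ^ γ) ≤
        C * ENNReal.ofReal (r ^ ((N : ℝ) + γ)) := by
  set q : ℝ := (2 : ℝ) ^ (-((N : ℝ) + γ)) with hq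
  have hNγ : (0 : ℝ) < (N : ℝ) + γ := by linarith
  have hq01 : 0 < q ∧ q < 1 := by
    constructor
    · exact Real.rpow_pos_of_pos (by norm_num) _
    · rw [hq]
      calc (2 : ℝ) ^ (-((N : ℝ) + γ)) < 2 ^ (0 : ℝ) := by
            apply Real.rpow_lt_rpow_left_iff (x := 2) (by norm_num) |>.mpr; linarith
        _ = 1 := Real.rpow_zero 2
  refine ⟨ENNReal.ofReal (2 ^ (|γ| + N)) * (1 - ENNReal.ofReal q)⁻¹, ?_, ?_⟩
  · apply ENNReal.mul_ne_top ENNReal.ofReal_ne_top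
    rw [Ne, ENNReal.inv_eq_top, tsub_eq_zero_iff_le]
    exact fun hle => absurd (ENNReal.one_le_ofReal.mp hle) (not_le.mpr hq01.2)
  intro r hr
  set A : ℕ → Set (Fin N → ℝ) :=
    fun k => {x | r * 2⁻¹ ^ (k + 1) < rho x ∧ rho x ≤ r * 2⁻¹ ^ k} with hA
  have hcover : {x : Fin N → ℝ | rho x ≤ r} \ {x | rho x = 0} ⊆ ⋃ k, A k := by
    rintro x ⟨hx1, hx2⟩
    have hx0 : 0 < rho x := lt_of_le_of_ne (rho_nonneg x) (Ne.symm hx2)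
    have hex : ∃ k : ℕ, r < 2 ^ (k + 1) * rho x := by
      obtain ⟨k, hk⟩ := pow_unbounded_of_one_lt (r / rho x) (by norm_num : (1:ℝ) < 2)
      exact ⟨k, by rw [div_lt_iff₀ hx0] at hk; calc r < 2 ^ k * rho x := hk
        _ ≤ 2 ^ (k + 1) * rho x := by
          apply mul_le_mul_of_nonneg_right _ hx0.le
          apply pow_le_pow_right₀ (by norm_num) (by omega)⟩
    set k := Nat.find hex with hk
    have hk1 : r < 2 ^ (k + 1) * rho x := Nat.find_spec hex
    refine Set.mem_iUnion.mpr ⟨k, ?_, ?_⟩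
    · rw [mul_comm]
      rw [inv_pow]
      rw [inv_mul_lt_iff₀ (by positivity)]
      linarith [hk1]
    · rcases Nat.eq_zero_or_pos k with h0 | h0
      · rw [h0]; simpa using hx1
      · have := Nat.find_min hex (m := k - 1) (by omega)
        push_neg at this
        have hkk : k - 1 + 1 = k := by omega
        rw [hkk] at this
        rw [mul_comm, inv_pow]
        rw [le_inv_mul_iff₀ (by positivity : (0:ℝ) < 2 ^ k)]
        linarith [this]
  have hmeasA : ∀ k, MeasurableSet (A k) := by
    intro k
    exact (measurableSet_lt measurable_const measurable_rho).inter
      (measurableSet_le measurable_rho measurable_const)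
  have hbound : ∀ k : ℕ, ∫⁻ x in A k, ENNReal.ofReal (rho x ^ γ) ≤
      ENNReal.ofReal (2 ^ (|γ| + N) * r ^ ((N : ℝ) + γ)) * ENNReal.ofReal (q ^ k) := by
    intro k
    set u : ℝ := r * 2⁻¹ ^ k with hu
    have hu0 : 0 < u := by positivity
    have hpt : ∀ x ∈ A k, rho x ^ γ ≤ 2 ^ |γ| * u ^ γ := by
      intro x hx
      obtain ⟨hx1, hx2⟩ := hx
      have hx0 : 0 < rho x := lt_of_le_of_lt (by positivity) hx1
      rcases le_or_gt 0 γ with hγ0 | hγ0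
      · calc rho x ^ γ ≤ u ^ γ := Real.rpow_le_rpow hx0.le hx2 hγ0
          _ ≤ 2 ^ |γ| * u ^ γ := by
            have h1 : (1:ℝ) ≤ 2 ^ |γ| := by
              simpa using Real.rpow_le_rpow_of_exponent_le (by norm_num : (1:ℝ) ≤ 2) (abs_nonneg γ)
            nlinarith [Real.rpow_pos_of_pos hu0 γ]
      · have h1 : u * 2⁻¹ < rho x := by
          rw [hu]
          calc u * 2⁻¹ = r * 2⁻¹ ^ (k + 1) := by rw [hu]; ring
            _ < rho x := hx1
        calc rho x ^ γ ≤ (u * 2⁻¹) ^ γ :=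
              Real.rpow_le_rpow_of_nonpos (by positivity) h1.le hγ0.le
          _ = u ^ γ * (2⁻¹ : ℝ) ^ γ := Real.mul_rpow hu0.le (by norm_num)
          _ = 2 ^ |γ| * u ^ γ := by
            rw [abs_of_neg hγ0, Real.inv_rpow (by norm_num), ← Real.rpow_neg (by norm_num)]
            ring
    have hAsub : A k ⊆ {x : Fin N → ℝ | rho x ≤ u} := fun x hx => hx.2
    calc ∫⁻ x in A k, ENNReal.ofReal (rho x ^ γ)
        ≤ ∫⁻ _ in A k, ENNReal.ofReal (2 ^ |γ| * u ^ γ) :=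
          setLIntegral_mono' (hmeasA k) fun x hx => ENNReal.ofReal_le_ofReal (hpt x hx)
      _ = ENNReal.ofReal (2 ^ |γ| * u ^ γ) * volume (A k) := by
          rw [MeasureTheory.setLIntegral_const]
      _ ≤ ENNReal.ofReal (2 ^ |γ| * u ^ γ) * ENNReal.ofReal ((2 * u) ^ N) := by
          apply mul_le_mul_right
          exact (measure_mono hAsub).trans (volume_sublevel_le hu0.le)
      _ = ENNReal.ofReal (2 ^ (|γ| + N) * r ^ ((N : ℝ) + γ)) * ENNReal.ofReal (q ^ k) := by
          rw [← ENNReal.ofReal_mul (by positivity), ← ENNReal.ofReal_mul (by positivity)]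
          congr 1
          have hv : ((2 : ℝ)⁻¹) ^ k = (2 : ℝ) ^ (-(k : ℝ)) := by
            rw [Real.rpow_neg (by norm_num : (0:ℝ) ≤ 2), Real.rpow_natCast, inv_pow]
          have h2 : (0 : ℝ) < 2 := by norm_num
          rw [hu, Real.mul_rpow hr.le (by positivity), mul_pow, mul_pow, hv,
            ← Real.rpow_natCast ((2 : ℝ) ^ (-(k : ℝ))) N, ← Real.rpow_natCast r N,
            ← Real.rpow_natCast (2 : ℝ) N,
            ← Real.rpow_mul h2.le, ← Real.rpow_mul h2.le, hq,
            ← Real.rpow_natCast ((2 : ℝ) ^ (-((N : ℝ) + γ))) k,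
            ← Real.rpow_mul h2.le,
            show -((N : ℝ) + γ) * (k : ℝ) = -(k : ℝ) * γ + -(k : ℝ) * (N : ℝ) by ring,
            Real.rpow_add h2, Real.rpow_add h2, Real.rpow_add hr]
          ring
  calc ∫⁻ x in {x : Fin N → ℝ | rho x ≤ r}, ENNReal.ofReal (rho x ^ γ)
      = ∫⁻ x in {x : Fin N → ℝ | rho x ≤ r} \ {x | rho x = 0}, ENNReal.ofReal (rho x ^ γ) := by
        apply setLIntegral_congr
        rw [MeasureTheory.ae_eq_set]
        constructor
        · refine measure_mono_null ?_ (volume_rho_zero hN)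
          intro x hx
          by_contra hz
          exact hx.2 ⟨hx.1, hz⟩
        · simp
    _ ≤ ∫⁻ x in ⋃ k, A k, ENNReal.ofReal (rho x ^ γ) := lintegral_mono_set hcover
    _ ≤ ∑' k, ∫⁻ x in A k, ENNReal.ofReal (rho x ^ γ) := lintegral_iUnion_le _ _
    _ ≤ ∑' k, ENNReal.ofReal (2 ^ (|γ| + N) * r ^ ((N : ℝ) + γ)) * ENNReal.ofReal (q ^ k) :=
        ENNReal.tsum_le_tsum hbound
    _ ≤ ENNReal.ofReal (2 ^ (|γ| + N)) * (1 - ENNReal.ofReal q)⁻¹ *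
        ENNReal.ofReal (r ^ ((N : ℝ) + γ)) := by
        rw [ENNReal.tsum_mul_left]
        have h1 : ∑' k : ℕ, ENNReal.ofReal (q ^ k) = (1 - ENNReal.ofReal q)⁻¹ := by
          have : ∀ k : ℕ, ENNReal.ofReal (q ^ k) = (ENNReal.ofReal q) ^ k := fun k =>
            ENNReal.ofReal_pow hq01.1.le k
          simp_rw [this]
          exact ENNReal.tsum_geometric _
        rw [h1, ENNReal.ofReal_mul (by positivity)]
        ring_nf
        exact le_refl _

noncomputable def gfun (c d t : ℝ) : ℝ := if t ≤ 1 then t ^ c else Real.exp (d * (t - 1))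

lemma gfun_nonneg {t : ℝ} (c d : ℝ) (ht : 0 ≤ t) : 0 ≤ gfun c d t := by
  unfold gfun; split
  · exact Real.rpow_nonneg ht c
  · exact (Real.exp_pos _).le

lemma gfun_pos {t : ℝ} (c d : ℝ) (ht : 0 < t) : 0 < gfun c d t := by
  unfold gfun; split
  · exact Real.rpow_pos_of_pos ht c
  · exact Real.exp_pos _

lemma one_le_base_rpow_abs {b : ℝ} (hb : 1 ≤ b) (c : ℝ) : 1 ≤ b ^ |c| := by
  simpa using Real.rpow_le_rpow_of_exponent_le hb (abs_nonneg c)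

lemma one_le_rpow' {b c : ℝ} (hb : 1 ≤ b) (hc : 0 ≤ c) : 1 ≤ b ^ c := by
  calc (1:ℝ) = 1 ^ c := (Real.one_rpow c).symm
    _ ≤ b ^ c := Real.rpow_le_rpow zero_le_one hb hc

/-- Pointwise bound near the origin: `gfun c d t ≤ K t^c` for `0 ≤ t ≤ T`. -/
lemma gfun_le_near {c d T : ℝ} (hT : 1 ≤ T) {t : ℝ} (h0 : 0 ≤ t) (hle : t ≤ T) :
    gfun c d t ≤ (Real.exp (|d| * T) * T ^ |c|) * t ^ c := by
  have hK1 : (1 : ℝ) ≤ Real.exp (|d| * T) := by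
    rw [Real.one_le_exp_iff]; positivity
  have hK2 : (1 : ℝ) ≤ T ^ |c| := one_le_base_rpow_abs hT c
  unfold gfun; split
  · have htc : 0 ≤ t ^ c := Real.rpow_nonneg h0 c
    have hEK : (1 : ℝ) ≤ Real.exp (|d| * T) * T ^ |c| := by nlinarith
    calc t ^ c = 1 * t ^ c := (one_mul _).symm
      _ ≤ (Real.exp (|d| * T) * T ^ |c|) * t ^ c := mul_le_mul_of_nonneg_right hEK htc
  · rename_i ht1
    push_neg at ht1
    have ht0 : (0 : ℝ) < t := lt_trans one_pos ht1
    have he : Real.exp (d * (t - 1)) ≤ Real.exp (|d| * T) := by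
      apply Real.exp_le_exp.mpr
      calc d * (t - 1) ≤ |d * (t - 1)| := le_abs_self _
        _ = |d| * |t - 1| := abs_mul _ _
        _ ≤ |d| * T := by
          apply mul_le_mul_of_nonneg_left _ (abs_nonneg d)
          rw [abs_of_nonneg (by linarith)]; linarith
    have h1 : (1 : ℝ) ≤ T ^ |c| * t ^ c := by
      rcases le_or_gt 0 c with hc | hc
      · have h2 : (1 : ℝ) ≤ t ^ c := one_le_rpow' ht1.le hc
        nlinarith
      · have h2 : T ^ c ≤ t ^ c := Real.rpow_le_rpow_of_nonpos ht0 hle hc.le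
        have h3 : T ^ |c| * T ^ c = 1 := by
          rw [abs_of_neg hc, ← Real.rpow_add (by linarith), neg_add_cancel, Real.rpow_zero]
        calc (1 : ℝ) = T ^ |c| * T ^ c := h3.symm
          _ ≤ T ^ |c| * t ^ c := mul_le_mul_of_nonneg_left h2 (by positivity)
    calc Real.exp (d * (t - 1)) ≤ Real.exp (|d| * T) * 1 := by linarith
      _ ≤ Real.exp (|d| * T) * (T ^ |c| * t ^ c) := by nlinarith
      _ = Real.exp (|d| * T) * T ^ |c| * t ^ c := by ring

/-- Pointwise comparability on "far" cubes. -/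
lemma gfun_far {c d s m t : ℝ} (hs : 0 ≤ s) (hm : 0 < m)
    (h1 : |t - m| ≤ s / 2) (h2 : |t - m| ≤ m / 4) :
    gfun c d t ≤ ((4 / 3 : ℝ) ^ |c| * Real.exp (|d| * s)) * gfun c d m := by
  have habs1 := abs_le.mp h1
  have habs2 := abs_le.mp h2
  have ht_lb : 3 / 4 * m ≤ t := by linarith
  have ht_ub : t ≤ 5 / 4 * m := by linarith
  have ht0 : 0 < t := by linarith
  have hK1 : (1 : ℝ) ≤ (4 / 3 : ℝ) ^ |c| := one_le_base_rpow_abs (by norm_num) c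
  have hK2 : (1 : ℝ) ≤ Real.exp (|d| * s) := by rw [Real.one_le_exp_iff]; positivity
  have hK1' : (0 : ℝ) < (4 / 3 : ℝ) ^ |c| := by positivity
  have hc_le : (4 / 3 : ℝ) ^ c ≤ (4 / 3 : ℝ) ^ |c| :=
    Real.rpow_le_rpow_of_exponent_le (by norm_num) (le_abs_self c)
  have hcneg : ∀ (hc : c < 0), (3 / 4 : ℝ) ^ c = (4 / 3 : ℝ) ^ |c| := by
    intro hc
    rw [abs_of_neg hc, show (3 / 4 : ℝ) = (4 / 3 : ℝ)⁻¹ by norm_num,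
      Real.inv_rpow (by norm_num), ← Real.rpow_neg (by norm_num)]
  have hexp_half : Real.exp (|d| * (s / 2)) ≤ Real.exp (|d| * s) :=
    Real.exp_le_exp.mpr (by nlinarith [abs_nonneg d])
  unfold gfun
  split <;> split
  · rename_i htle hmle
    have key : t ^ c ≤ (4 / 3 : ℝ) ^ |c| * m ^ c := by
      rcases le_or_gt 0 c with hc | hc
      · calc t ^ c ≤ (4 / 3 * m) ^ c := Real.rpow_le_rpow ht0.le (by linarith) hc
          _ = (4 / 3 : ℝ) ^ c * m ^ c := Real.mul_rpow (by norm_num) hm.le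
          _ ≤ (4 / 3 : ℝ) ^ |c| * m ^ c := by
            exact mul_le_mul_of_nonneg_right hc_le (Real.rpow_nonneg hm.le c)
      · calc t ^ c ≤ (3 / 4 * m) ^ c :=
              Real.rpow_le_rpow_of_nonpos (by linarith) ht_lb hc.le
          _ = (3 / 4 : ℝ) ^ c * m ^ c := Real.mul_rpow (by norm_num) hm.le
          _ = (4 / 3 : ℝ) ^ |c| * m ^ c := by rw [hcneg hc]
    have hmc : 0 ≤ m ^ c := Real.rpow_nonneg hm.le c
    calc t ^ c ≤ (4 / 3 : ℝ) ^ |c| * m ^ c := key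
      _ = (4 / 3 : ℝ) ^ |c| * m ^ c * 1 := (mul_one _).symm
      _ ≤ (4 / 3 : ℝ) ^ |c| * m ^ c * Real.exp (|d| * s) := by
          exact mul_le_mul_of_nonneg_left hK2 (by positivity)
      _ = (4 / 3 : ℝ) ^ |c| * Real.exp (|d| * s) * m ^ c := by ring
  · rename_i htle hmgt
    push_neg at hmgt
    have hm1 : m - 1 ≤ s / 2 := by linarith
    have hge : Real.exp (-(|d| * s)) ≤ Real.exp (d * (m - 1)) := by
      apply Real.exp_le_exp.mpr
      have : |d * (m - 1)| ≤ |d| * s := by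
        rw [abs_mul, abs_of_nonneg (by linarith : (0:ℝ) ≤ m - 1)]
        nlinarith [abs_nonneg d]
      linarith [neg_abs_le (d * (m - 1))]
    have htc : t ^ c ≤ (4 / 3 : ℝ) ^ |c| := by
      have ht34 : 3 / 4 ≤ t := by linarith
      rcases le_or_gt 0 c with hc | hc
      · calc t ^ c ≤ 1 ^ c := Real.rpow_le_rpow ht0.le htle hc
          _ = 1 := Real.one_rpow c
          _ ≤ _ := hK1
      · calc t ^ c ≤ (3 / 4 : ℝ) ^ c :=
              Real.rpow_le_rpow_of_nonpos (by norm_num) ht34 hc.le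
          _ = (4 / 3 : ℝ) ^ |c| := hcneg hc
    calc t ^ c ≤ (4 / 3 : ℝ) ^ |c| := htc
      _ = (4 / 3 : ℝ) ^ |c| * (Real.exp (|d| * s) * Real.exp (-(|d| * s))) := by
          rw [← Real.exp_add]; simp
      _ ≤ (4 / 3 : ℝ) ^ |c| * (Real.exp (|d| * s) * Real.exp (d * (m - 1))) := by
          apply mul_le_mul_of_nonneg_left _ hK1'.le
          exact mul_le_mul_of_nonneg_left hge (Real.exp_pos _).le
      _ = (4 / 3 : ℝ) ^ |c| * Real.exp (|d| * s) * Real.exp (d * (m - 1)) := by ring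
  · rename_i htgt hmle
    push_neg at htgt
    have ht1 : t - 1 ≤ s / 2 := by linarith
    have hexp : Real.exp (d * (t - 1)) ≤ Real.exp (|d| * s) := by
      apply Real.exp_le_exp.mpr
      calc d * (t - 1) ≤ |d * (t - 1)| := le_abs_self _
        _ = |d| * |t - 1| := abs_mul _ _
        _ ≤ |d| * s := by
          apply mul_le_mul_of_nonneg_left _ (abs_nonneg d)
          rw [abs_of_nonneg (by linarith)]; linarith
    have hmlb : 3 / 4 ≤ m := by nlinarith
    have hmc : (1 : ℝ) ≤ (4 / 3 : ℝ) ^ (|c|) * m ^ c := by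
      rcases le_or_gt 0 c with hc | hc
      · have h3 : (3 / 4 : ℝ) ^ c ≤ m ^ c := Real.rpow_le_rpow (by norm_num) hmlb hc
        have h34 : (4 / 3 : ℝ) ^ |c| * (3 / 4 : ℝ) ^ c = 1 := by
          rw [abs_of_nonneg hc, show (3 / 4 : ℝ) = (4 / 3 : ℝ)⁻¹ by norm_num,
            Real.inv_rpow (by norm_num), ← Real.rpow_neg (by norm_num),
            ← Real.rpow_add (by norm_num)]
          simp
        calc (1:ℝ) = (4 / 3 : ℝ) ^ |c| * (3 / 4 : ℝ) ^ c := h34.symm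
          _ ≤ (4 / 3 : ℝ) ^ |c| * m ^ c := mul_le_mul_of_nonneg_left h3 hK1'.le
      · have h1m : (1 : ℝ) ≤ m ^ c := by
          calc (1:ℝ) = 1 ^ c := (Real.one_rpow c).symm
            _ ≤ m ^ c := Real.rpow_le_rpow_of_nonpos hm hmle hc.le
        calc (1:ℝ) ≤ m ^ c := h1m
          _ = 1 * m ^ c := (one_mul _).symm
          _ ≤ (4 / 3 : ℝ) ^ |c| * m ^ c := by
              exact mul_le_mul_of_nonneg_right hK1 (by positivity)
    calc Real.exp (d * (t - 1)) ≤ Real.exp (|d| * s) := hexp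
      _ = 1 * Real.exp (|d| * s) := (one_mul _).symm
      _ ≤ ((4 / 3 : ℝ) ^ |c| * m ^ c) * Real.exp (|d| * s) := by
          apply mul_le_mul_of_nonneg_right hmc (Real.exp_pos _).le
      _ = (4 / 3 : ℝ) ^ |c| * Real.exp (|d| * s) * m ^ c := by ring
  · rename_i htgt hmgt
    have hsplit : d * (t - 1) = d * (m - 1) + d * (t - m) := by ring
    have hexp : Real.exp (d * (t - m)) ≤ Real.exp (|d| * s) := by
      apply Real.exp_le_exp.mpr
      calc d * (t - m) ≤ |d * (t - m)| := le_abs_self _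
        _ = |d| * |t - m| := abs_mul _ _
        _ ≤ |d| * s := by
          apply mul_le_mul_of_nonneg_left _ (abs_nonneg d)
          linarith
    calc Real.exp (d * (t - 1)) = Real.exp (d * (m - 1)) * Real.exp (d * (t - m)) := by
          rw [← Real.exp_add, ← hsplit]
      _ ≤ Real.exp (d * (m - 1)) * Real.exp (|d| * s) := by
          exact mul_le_mul_of_nonneg_left hexp (Real.exp_pos _).le
      _ = 1 * (Real.exp (d * (m - 1)) * Real.exp (|d| * s)) := (one_mul _).symm
      _ ≤ (4 / 3 : ℝ) ^ |c| * (Real.exp (d * (m - 1)) * Real.exp (|d| * s)) := by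
          exact mul_le_mul_of_nonneg_right hK1 (by positivity)
      _ = (4 / 3 : ℝ) ^ |c| * Real.exp (|d| * s) * Real.exp (d * (m - 1)) := by ring

lemma rho_sub_le {N : ℕ} {a x : Fin N → ℝ} {h : ℝ} (hh : 0 ≤ h) (hx : x ∈ locCube N a h) :
    rho (x - a) ≤ Real.sqrt N * (h / 2) := by
  have hb : ∀ i, (x i - a i) ^ 2 ≤ (h / 2) ^ 2 := by
    intro i
    have hi := hx i (Set.mem_univ i)
    have h1 : |x i - a i| ≤ h / 2 := abs_le.mpr ⟨by linarith [hi.1], by linarith [hi.2]⟩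
    calc (x i - a i) ^ 2 = |x i - a i| ^ 2 := (sq_abs _).symm
      _ ≤ (h / 2) ^ 2 := pow_le_pow_left₀ (abs_nonneg _) h1 2
  have hsum : ∑ i, ((x - a) i) ^ 2 ≤ (N : ℝ) * (h / 2) ^ 2 := by
    calc ∑ i, ((x - a) i) ^ 2 = ∑ i : Fin N, (x i - a i) ^ 2 := rfl
      _ ≤ ∑ _i : Fin N, (h / 2) ^ 2 := Finset.sum_le_sum (fun i _ => hb i)
      _ = (N : ℝ) * (h / 2) ^ 2 := by
          rw [Finset.sum_const, Finset.card_univ, Fintype.card_fin, nsmul_eq_mul]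
  calc rho (x - a) ≤ Real.sqrt ((N : ℝ) * (h / 2) ^ 2) := Real.sqrt_le_sqrt hsum
    _ = Real.sqrt N * (h / 2) := by
        rw [Real.sqrt_mul (Nat.cast_nonneg N), Real.sqrt_sq (by linarith)]

/-- Uniform bound for `∫⁻ gfun c d (rho x)` over sublevel sets of bounded radius. -/
lemma lintegral_gfun_le {N : ℕ} (hN : 1 ≤ N) {c : ℝ} (hc : -(N : ℝ) < c) (d T : ℝ)
    (hT : 1 ≤ T) :
    ∃ D : ℝ≥0∞, D ≠ ⊤ ∧ ∀ r : ℝ, 0 < r → r ≤ T →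
      ∫⁻ x in {x : Fin N → ℝ | rho x ≤ r}, ENNReal.ofReal (gfun c d (rho x)) ≤
        D * ENNReal.ofReal (r ^ ((N : ℝ) + c)) := by
  obtain ⟨C, hCtop, hC⟩ := key_lintegral hN hc
  set K : ℝ := Real.exp (|d| * T) * T ^ |c| with hK
  have hK0 : 0 ≤ K := by positivity
  refine ⟨ENNReal.ofReal K * C, ENNReal.mul_ne_top ENNReal.ofReal_ne_top hCtop, ?_⟩
  intro r hr hrT
  have hmeasS : MeasurableSet {x : Fin N → ℝ | rho x ≤ r} :=
    measurableSet_le measurable_rho measurable_const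
  calc ∫⁻ x in {x : Fin N → ℝ | rho x ≤ r}, ENNReal.ofReal (gfun c d (rho x))
      ≤ ∫⁻ x in {x : Fin N → ℝ | rho x ≤ r}, ENNReal.ofReal K * ENNReal.ofReal (rho x ^ c) := by
        apply setLIntegral_mono' hmeasS
        intro x hx
        rw [← ENNReal.ofReal_mul hK0]
        exact ENNReal.ofReal_le_ofReal (gfun_le_near hT (rho_nonneg x) (le_trans hx hrT))
    _ = ENNReal.ofReal K * ∫⁻ x in {x : Fin N → ℝ | rho x ≤ r}, ENNReal.ofReal (rho x ^ c) :=
        lintegral_const_mul' _ _ ENNReal.ofReal_ne_top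
    _ ≤ ENNReal.ofReal K * (C * ENNReal.ofReal (r ^ ((N : ℝ) + c))) :=
        mul_le_mul_right (hC r hr) _
    _ = ENNReal.ofReal K * C * ENNReal.ofReal (r ^ ((N : ℝ) + c)) := by ring

/-- Bound for near cubes. -/
lemma near_cube_bound {N : ℕ} (hN : 1 ≤ N) {c : ℝ} (hc : -(N : ℝ) < c) (d : ℝ) :
    ∃ B : ℝ, 0 ≤ B ∧ ∀ (a : Fin N → ℝ) (h : ℝ), 0 < h → h ≤ 1 →
      rho a ≤ 2 * Real.sqrt N * h →
      ∫⁻ x in locCube N a h, ENNReal.ofReal (gfun c d (rho x)) ≤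
        ENNReal.ofReal (B * h ^ ((N : ℝ) + c)) := by
  have hsN : (1 : ℝ) ≤ Real.sqrt N := by
    rw [show (1:ℝ) = Real.sqrt 1 by simp]
    exact Real.sqrt_le_sqrt (by exact_mod_cast hN)
  have hsN0 : (0 : ℝ) < Real.sqrt N := by linarith
  obtain ⟨D, hDtop, hD⟩ := lintegral_gfun_le hN hc d (3 * Real.sqrt N) (by linarith)
  set D' : ℝ≥0∞ := D * ENNReal.ofReal ((3 * Real.sqrt N) ^ ((N : ℝ) + c)) with hD'
  have hD'top : D' ≠ ⊤ := ENNReal.mul_ne_top hDtop ENNReal.ofReal_ne_top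
  refine ⟨D'.toReal, ENNReal.toReal_nonneg, ?_⟩
  intro a h hh hh1 hnear
  have hsub : locCube N a h ⊆ {x : Fin N → ℝ | rho x ≤ 3 * Real.sqrt N * h} := by
    intro x hx
    have h1 : rho x - rho a ≤ rho (x - a) := le_trans (le_abs_self _) (abs_rho_sub_rho x a)
    have h2 : rho (x - a) ≤ Real.sqrt N * (h / 2) := rho_sub_le hh.le hx
    have : rho x ≤ rho a + Real.sqrt N * (h / 2) := by linarith
    calc rho x ≤ 2 * Real.sqrt N * h + Real.sqrt N * (h / 2) := by linarith
      _ ≤ 3 * Real.sqrt N * h := by nlinarith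
  have hr0 : 0 < 3 * Real.sqrt N * h := by positivity
  have hrT : 3 * Real.sqrt N * h ≤ 3 * Real.sqrt N := by nlinarith
  calc ∫⁻ x in locCube N a h, ENNReal.ofReal (gfun c d (rho x))
      ≤ ∫⁻ x in {x : Fin N → ℝ | rho x ≤ 3 * Real.sqrt N * h},
          ENNReal.ofReal (gfun c d (rho x)) := lintegral_mono_set hsub
    _ ≤ D * ENNReal.ofReal ((3 * Real.sqrt N * h) ^ ((N : ℝ) + c)) := hD _ hr0 hrT
    _ = D' * ENNReal.ofReal (h ^ ((N : ℝ) + c)) := by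
        rw [hD', Real.mul_rpow (by positivity) hh.le, ENNReal.ofReal_mul (by positivity)]
        ring
    _ = ENNReal.ofReal (D'.toReal * h ^ ((N : ℝ) + c)) := by
        rw [ENNReal.ofReal_mul ENNReal.toReal_nonneg, ENNReal.ofReal_toReal hD'top]

lemma final_combine {x y hN C M₁ M₂ q : ℝ} (hhN0 : 0 < hN) (hM₁0 : 0 ≤ M₁)
    (hy : 0 ≤ y) (he1 : x ≤ M₁ * hN) (he2 : y ≤ M₂ * hN) (hq : 0 ≤ q)
    (hfin : M₁ * M₂ ^ q ≤ C) : x / hN * (hN⁻¹ * y) ^ q ≤ C := by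
  have h1 : x / hN ≤ M₁ := by rw [div_le_iff₀ hhN0]; linarith
  have h2 : hN⁻¹ * y ≤ M₂ := by rw [← div_eq_inv_mul, div_le_iff₀ hhN0]; linarith
  have h2' : 0 ≤ hN⁻¹ * y := by positivity
  have h3 : (hN⁻¹ * y) ^ q ≤ M₂ ^ q := Real.rpow_le_rpow h2' h2 hq
  calc x / hN * (hN⁻¹ * y) ^ q ≤ M₁ * M₂ ^ q :=
        mul_le_mul h1 h3 (Real.rpow_nonneg h2' _) hM₁0
    _ ≤ C := hfin

lemma meas_rpow_const {X : Type*} [MeasurableSpace X] {f : X → ℝ} (hf : Measurable f)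
    (c : ℝ) (h0 : ∀ x, 0 ≤ f x) : Measurable fun x => f x ^ c := by
  have heq : (fun x => f x ^ c) = fun x =>
      if f x = 0 then (if c = 0 then 1 else 0) else Real.exp (Real.log (f x) * c) := by
    funext x; exact Real.rpow_def_of_nonneg (h0 x) c
  rw [heq]
  apply Measurable.ite (measurableSet_eq_fun hf measurable_const) measurable_const
  exact Real.measurable_exp.comp ((Real.measurable_log.comp hf).mul_const c)

end ApLocAux

set_option maxHeartbeats 2000000

theorem memApLoc_example (N : ℕ) (hN : 1 ≤ N) (p α : ℝ) (hp : 1 < p)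
    (hα₁ : -(N : ℝ) < α) (hα₂ : α < (N : ℝ) * (p - 1)) :
    MemApLoc N p (fun x =>
      if Real.sqrt (∑ i, (x i) ^ 2) ≤ 1 then (Real.sqrt (∑ i, (x i) ^ 2)) ^ α
      else Real.exp (Real.sqrt (∑ i, (x i) ^ 2) - 1)) := by
  classical
  open ApLocAux in
  set w : (Fin N → ℝ) → ℝ := fun x =>
      if Real.sqrt (∑ i, (x i) ^ 2) ≤ 1 then (Real.sqrt (∑ i, (x i) ^ 2)) ^ α
      else Real.exp (Real.sqrt (∑ i, (x i) ^ 2) - 1) with hwdef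
  have hp1 : (0 : ℝ) < p - 1 := by linarith
  set β : ℝ := 1 - p / (p - 1) with hβ
  have hβval : β * (p - 1) = -1 := by
    rw [hβ]; field_simp; ring
  have hβneg : β < 0 := by nlinarith
  have hw1 : ∀ x, w x = ApLocAux.gfun α 1 (ApLocAux.rho x) := by
    intro x
    simp only [hwdef, ApLocAux.gfun, ApLocAux.rho, one_mul]
  have hw2 : ∀ x, w x ^ β = ApLocAux.gfun (α * β) β (ApLocAux.rho x) := by
    intro x
    rw [hw1]
    unfold ApLocAux.gfun
    split
    · rw [← Real.rpow_mul (ApLocAux.rho_nonneg x)]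
    · rw [one_mul, ← Real.exp_mul]
      ring_nf
  have hwnonneg : ∀ x, 0 ≤ w x := by
    intro x; rw [hw1]; exact ApLocAux.gfun_nonneg _ _ (ApLocAux.rho_nonneg x)
  have hmeasw : Measurable w := by
    apply Measurable.ite
    · exact measurableSet_le ApLocAux.measurable_rho measurable_const
    · exact ApLocAux.meas_rpow_const ApLocAux.measurable_rho α ApLocAux.rho_nonneg
    · exact Real.measurable_exp.comp (ApLocAux.measurable_rho.sub measurable_const)
  have hmeaswβ : Measurable fun x => w x ^ β :=
    ApLocAux.meas_rpow_const hmeasw β hwnonneg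
  have hαβ : -(N : ℝ) < α * β := by
    have : α * β = -(α / (p - 1)) := by rw [hβ]; field_simp; ring
    rw [this, neg_lt_neg_iff, div_lt_iff₀ hp1]
    linarith
  have hsN : (1 : ℝ) ≤ Real.sqrt N := by
    rw [show (1:ℝ) = Real.sqrt 1 by simp]
    exact Real.sqrt_le_sqrt (by exact_mod_cast hN)
  have hsN0 : (0 : ℝ) < Real.sqrt N := by linarith
  -- conversion helper
  have int_le : ∀ (f : (Fin N → ℝ) → ℝ) (s : Set (Fin N → ℝ)) (B : ℝ),
      Measurable f → (∀ x, 0 ≤ f x) → 0 ≤ B →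
      (∫⁻ x in s, ENNReal.ofReal (f x)) ≤ ENNReal.ofReal B → (∫ x in s, f x) ≤ B := by
    intro f s B hf h0 hB hle
    rw [integral_eq_lintegral_of_nonneg_ae (Filter.Eventually.of_forall h0)
      hf.aestronglyMeasurable]
    exact ENNReal.toReal_le_of_le_ofReal hB hle
  refine ⟨?_, ?_, ?_⟩
  · -- locally integrable
    intro x₀
    refine ⟨{y | ApLocAux.rho y < ApLocAux.rho x₀ + 1}, ?_, ?_⟩
    · exact (isOpen_lt ApLocAux.continuous_rho continuous_const).mem_nhds
        (by simp [lt_add_of_pos_right _ one_pos])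
    · constructor
      · exact hmeasw.aestronglyMeasurable
      · rw [hasFiniteIntegral_iff_ofReal (Filter.Eventually.of_forall hwnonneg)]
        set R : ℝ := ApLocAux.rho x₀ + 1 with hR
        have hR1 : (1 : ℝ) ≤ R := by
          have := ApLocAux.rho_nonneg x₀; rw [hR]; linarith
        obtain ⟨D, hDtop, hD⟩ := ApLocAux.lintegral_gfun_le hN hα₁ 1 R hR1
        have hsub : {y : Fin N → ℝ | ApLocAux.rho y < R} ⊆
            {y : Fin N → ℝ | ApLocAux.rho y ≤ R} := by
          intro y hy
          simp only [Set.mem_setOf_eq] at hy ⊢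
          exact hy.le
        calc ∫⁻ y in {y | ApLocAux.rho y < R}, ENNReal.ofReal (w y)
            ≤ ∫⁻ y in {y | ApLocAux.rho y ≤ R}, ENNReal.ofReal (w y) :=
              lintegral_mono_set hsub
          _ = ∫⁻ y in {y | ApLocAux.rho y ≤ R},
                ENNReal.ofReal (ApLocAux.gfun α 1 (ApLocAux.rho y)) := by
              apply lintegral_congr; intro y; rw [hw1]
          _ ≤ D * ENNReal.ofReal (R ^ ((N : ℝ) + α)) := hD R (by linarith) le_rfl
          _ < ⊤ := ENNReal.mul_lt_top hDtop.lt_top ENNReal.ofReal_lt_top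
  · -- a.e. positive
    rw [MeasureTheory.ae_iff]
    refine measure_mono_null ?_ (ApLocAux.volume_rho_zero hN)
    intro x hx
    simp only [Set.mem_setOf_eq, not_lt] at hx
    by_contra hrho
    have h0 : 0 < ApLocAux.rho x :=
      lt_of_le_of_ne (ApLocAux.rho_nonneg x) (Ne.symm hrho)
    have := ApLocAux.gfun_pos α 1 h0
    rw [← hw1] at this
    linarith
  · -- the uniform bound
    obtain ⟨B₁, hB₁0, hB₁⟩ := ApLocAux.near_cube_bound hN hα₁ 1
    obtain ⟨B₂, hB₂0, hB₂⟩ := ApLocAux.near_cube_bound hN hαβ β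
    set K₁ : ℝ := (4 / 3 : ℝ) ^ |α| * Real.exp (|1| * Real.sqrt N) with hK₁
    set K₂ : ℝ := (4 / 3 : ℝ) ^ |α * β| * Real.exp (|β| * Real.sqrt N) with hK₂
    have hK₁0 : 0 < K₁ := by rw [hK₁]; positivity
    have hK₂0 : 0 < K₂ := by rw [hK₂]; positivity
    refine ⟨max (B₁ * B₂ ^ (p - 1)) (K₁ * K₂ ^ (p - 1)), ?_⟩
    intro a h hh hhN
    have hh1 : h ≤ 1 := by
      by_contra hcon
      push_neg at hcon
      have : (1 : ℝ) < h ^ N := one_lt_pow₀ hcon (by omega)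
      linarith
    have hhN0 : (0 : ℝ) < h ^ N := pow_pos hh N
    -- rewrite the quantity
    unfold apLocQuantity
    rw [if_neg (by intro hcon; rw [hcon] at hp; exact lt_irrefl 1 hp)]
    have hexp : p / (p / (p - 1)) = p - 1 := by
      rw [div_div_eq_mul_div, mul_comm, mul_div_assoc, div_self (by linarith : p ≠ 0), mul_one]
    rw [hexp]
    rw [show (1 : ℝ) - p / (p - 1) = β from hβ.symm]
    have hwβnonneg : ∀ x, 0 ≤ w x ^ β := fun x => by
      rw [hw2]; exact ApLocAux.gfun_nonneg _ _ (ApLocAux.rho_nonneg x)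
    have hI₂0 : 0 ≤ ∫ x in locCube N a h, w x ^ β := integral_nonneg hwβnonneg
    rcases le_or_gt (ApLocAux.rho a) (2 * Real.sqrt N * h) with hnear | hfar
    · -- near case
      have e1 : (∫ x in locCube N a h, w x) ≤ (B₁ * h ^ α) * h ^ N := by
        apply int_le _ _ _ hmeasw hwnonneg (by positivity)
        have := hB₁ a h hh hh1 hnear
        calc ∫⁻ x in locCube N a h, ENNReal.ofReal (w x)
            = ∫⁻ x in locCube N a h, ENNReal.ofReal (ApLocAux.gfun α 1 (ApLocAux.rho x)) := by
              apply lintegral_congr; intro y; rw [hw1]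
          _ ≤ ENNReal.ofReal (B₁ * h ^ ((N : ℝ) + α)) := this
          _ = ENNReal.ofReal (B₁ * h ^ α * h ^ N) := by
              rw [Real.rpow_add hh, Real.rpow_natCast]; ring_nf
      have e2 : (∫ x in locCube N a h, w x ^ β) ≤ (B₂ * h ^ (α * β)) * h ^ N := by
        apply int_le _ _ _ hmeaswβ (fun x => by
          rw [hw2]; exact ApLocAux.gfun_nonneg _ _ (ApLocAux.rho_nonneg x)) (by positivity)
        have := hB₂ a h hh hh1 hnear
        calc ∫⁻ x in locCube N a h, ENNReal.ofReal (w x ^ β)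
            = ∫⁻ x in locCube N a h,
                ENNReal.ofReal (ApLocAux.gfun (α * β) β (ApLocAux.rho x)) := by
              apply lintegral_congr; intro y; rw [hw2]
          _ ≤ ENNReal.ofReal (B₂ * h ^ ((N : ℝ) + α * β)) := this
          _ = ENNReal.ofReal (B₂ * h ^ (α * β) * h ^ N) := by
              rw [Real.rpow_add hh, Real.rpow_natCast]; ring_nf
      apply ApLocAux.final_combine hhN0 (by positivity) hI₂0 e1 e2 (by linarith)
      refine le_trans (le_of_eq ?_) (le_max_left _ _)
      rw [Real.mul_rpow hB₂0 (Real.rpow_nonneg hh.le _), ← Real.rpow_mul hh.le]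
      have hcancel : h ^ α * (B₂ ^ (p - 1) * h ^ (α * β * (p - 1))) = B₂ ^ (p - 1) := by
        have : α * β * (p - 1) = -α := by
          rw [mul_assoc, hβval]; ring
        have hne : h ^ α ≠ 0 := (Real.rpow_pos_of_pos hh α).ne'
        rw [this, Real.rpow_neg hh.le]
        field_simp
      calc B₁ * h ^ α * (B₂ ^ (p - 1) * h ^ (α * β * (p - 1)))
          = B₁ * (h ^ α * (B₂ ^ (p - 1) * h ^ (α * β * (p - 1)))) := by ring
        _ = B₁ * B₂ ^ (p - 1) := by rw [hcancel]
    · -- far case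
      have hm0 : 0 < ApLocAux.rho a := lt_trans (by positivity) hfar
      set g₁ : ℝ := ApLocAux.gfun α 1 (ApLocAux.rho a) with hg₁
      set g₂ : ℝ := ApLocAux.gfun (α * β) β (ApLocAux.rho a) with hg₂
      have hg₁0 : 0 < g₁ := ApLocAux.gfun_pos _ _ hm0
      have hg₂0 : 0 < g₂ := ApLocAux.gfun_pos _ _ hm0
      have hg₂eq : g₂ = g₁ ^ β := by
        rw [hg₁, hg₂, ← hw1, ← hw2]
      have hptw : ∀ x ∈ locCube N a h, ∀ c d : ℝ,
          ApLocAux.gfun c d (ApLocAux.rho x) ≤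
            ((4 / 3 : ℝ) ^ |c| * Real.exp (|d| * Real.sqrt N)) *
              ApLocAux.gfun c d (ApLocAux.rho a) := by
        intro x hx c d
        apply ApLocAux.gfun_far hsN0.le hm0
        · calc |ApLocAux.rho x - ApLocAux.rho a| ≤ ApLocAux.rho (x - a) :=
              ApLocAux.abs_rho_sub_rho x a
            _ ≤ Real.sqrt N * (h / 2) := ApLocAux.rho_sub_le hh.le hx
            _ ≤ Real.sqrt N / 2 := by nlinarith
        · calc |ApLocAux.rho x - ApLocAux.rho a| ≤ ApLocAux.rho (x - a) :=
              ApLocAux.abs_rho_sub_rho x a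
            _ ≤ Real.sqrt N * (h / 2) := ApLocAux.rho_sub_le hh.le hx
            _ ≤ ApLocAux.rho a / 4 := by nlinarith
      have ecube : ∀ (f : (Fin N → ℝ) → ℝ) (c d : ℝ) (K : ℝ), 0 < K → Measurable f →
          (∀ x, 0 ≤ f x) → (∀ x, f x = ApLocAux.gfun c d (ApLocAux.rho x)) →
          (K = (4 / 3 : ℝ) ^ |c| * Real.exp (|d| * Real.sqrt N)) →
          (∫ x in locCube N a h, f x) ≤ K * ApLocAux.gfun c d (ApLocAux.rho a) * h ^ N := by
        intro f c d K hK hf h0 hfeq hKeq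
        have hgcd0 : 0 < ApLocAux.gfun c d (ApLocAux.rho a) := ApLocAux.gfun_pos _ _ hm0
        apply int_le _ _ _ hf h0 (by positivity)
        calc ∫⁻ x in locCube N a h, ENNReal.ofReal (f x)
            ≤ ∫⁻ _ in locCube N a h,
                ENNReal.ofReal (K * ApLocAux.gfun c d (ApLocAux.rho a)) := by
              apply setLIntegral_mono' (ApLocAux.measurableSet_locCube a h)
              intro x hx
              apply ENNReal.ofReal_le_ofReal
              rw [hfeq, hKeq]
              exact hptw x hx c d
          _ = ENNReal.ofReal (K * ApLocAux.gfun c d (ApLocAux.rho a)) *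
                volume (locCube N a h) := MeasureTheory.setLIntegral_const _ _
          _ = ENNReal.ofReal (K * ApLocAux.gfun c d (ApLocAux.rho a) * h ^ N) := by
              rw [ApLocAux.volume_locCube a hh.le,
                ← ENNReal.ofReal_mul (by positivity)]
      have e1 : (∫ x in locCube N a h, w x) ≤ K₁ * g₁ * h ^ N := by
        apply ecube w α 1 K₁ hK₁0 hmeasw hwnonneg hw1 hK₁
      have e2 : (∫ x in locCube N a h, w x ^ β) ≤ K₂ * g₂ * h ^ N := by
        apply ecube _ (α * β) β K₂ hK₂0 hmeaswβ (fun x => by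
          rw [hw2]; exact ApLocAux.gfun_nonneg _ _ (ApLocAux.rho_nonneg x)) hw2 hK₂
      apply ApLocAux.final_combine hhN0 (by positivity) hI₂0 e1 e2 (by linarith)
      refine le_trans (le_of_eq ?_) (le_max_right _ _)
      rw [hg₂eq, Real.mul_rpow hK₂0.le (Real.rpow_nonneg hg₁0.le _),
        ← Real.rpow_mul hg₁0.le, hβval, Real.rpow_neg_one]
      field_simp
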